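/- arXiv:1512.05717 — 4 statements merged into one kernel-verified Lean document; each statement's English description precedes it below -/
import Mathlib

section
/- Every point p = (p₀,p₁,p₂,p₃) on the elliptic curve E ⊂ P³ defined by the two quadrics y₀²+y₁²+y₂²+y₃² = 0 and y₃² + ((1-γ)/(1+α))y₁² + ((1+γ)/(1-β))y₂² = 0 has at least three non-zero coordinates, provided α + β + γ + αβγ = 0 and {α,β,γ} ∩ {0,±1} = ∅. -/
/-- every point `p` on the elliptic curve `E ⊂ P³` cut out by
`y₀²+y₁²+y₂²+y₃² = 0` and `y₃² + ((1-γ)/(1+α))y₁² + ((1+γ)/(1-β))y₂² = 0` has at least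
three non-zero coordinates, provided `α+β+γ+αβγ = 0` and `{α,β,γ} ∩ {0,±1} = ∅`. -/
theorem stmt5 {k : Type*} [Field k] [IsAlgClosed k] (h2 : (2 : k) ≠ 0)
    (α β γ : k) (hsum : α + β + γ + α * β * γ = 0)
    (hα : α ≠ 0 ∧ α ≠ 1 ∧ α ≠ -1) (hβ : β ≠ 0 ∧ β ≠ 1 ∧ β ≠ -1)
    (hγ : γ ≠ 0 ∧ γ ≠ 1 ∧ γ ≠ -1)
    (p : Fin 4 → k) (hp : p ≠ 0)
    (he1 : p 0 ^ 2 + p 1 ^ 2 + p 2 ^ 2 + p 3 ^ 2 = 0)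
    (he2 : p 3 ^ 2 + ((1 - γ) / (1 + α)) * p 1 ^ 2 + ((1 + γ) / (1 - β)) * p 2 ^ 2 = 0) :
    ∃ a b c : Fin 4, a ≠ b ∧ a ≠ c ∧ b ≠ c ∧ p a ≠ 0 ∧ p b ≠ 0 ∧ p c ≠ 0 := by
  have ha : (1 + α) ≠ 0 := fun h => hα.2.2 (by linear_combination h)
  have ha' : (1 - α) ≠ 0 := fun h => hα.2.1 (by linear_combination -h)
  have hb : (1 - β) ≠ 0 := fun h => hβ.2.1 (by linear_combination -h)
  have hb' : (1 + β) ≠ 0 := fun h => hβ.2.2 (by linear_combination h)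
  have hg : (1 - γ) ≠ 0 := fun h => hγ.2.1 (by linear_combination -h)
  have hg' : (1 + γ) ≠ 0 := fun h => hγ.2.2 (by linear_combination h)
  have sqz : ∀ x : k, x ^ 2 = 0 → x = 0 := fun x hx =>
    pow_eq_zero_iff (by norm_num : (2 : ℕ) ≠ 0) |>.mp hx
  have hβγ : β + γ ≠ 0 := by
    intro h
    have hg2 : γ = -β := by linear_combination h
    subst hg2
    have : α * ((1 - β) * (1 + β)) = 0 := by linear_combination hsum
    exact hα.1 ((mul_eq_zero.mp this).resolve_right (mul_ne_zero hb hb'))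
  have hαγ : α + γ ≠ 0 := by
    intro h
    have hg2 : γ = -α := by linear_combination h
    subst hg2
    have : β * ((1 - α) * (1 + α)) = 0 := by linear_combination hsum
    exact hβ.1 ((mul_eq_zero.mp this).resolve_right (mul_ne_zero ha' ha))
  have hN : (1 + γ) * (1 + α) - (1 - γ) * (1 - β) = γ * ((1 + α) * (1 - β)) := by
    linear_combination hsum
  have hNne : (1 + γ) * (1 + α) - (1 - γ) * (1 - β) ≠ 0 := by
    rw [hN]; exact mul_ne_zero hγ.1 (mul_ne_zero ha hb)
  have he2' : (1 + α) * (1 - β) * p 3 ^ 2 + (1 - γ) * (1 - β) * p 1 ^ 2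
      + (1 + γ) * (1 + α) * p 2 ^ 2 = 0 := by
    field_simp at he2
    linear_combination he2
  clear he2
  have hall : ¬ (∀ i, p i = 0) := fun h => hp (funext h)
  by_cases h0 : p 0 = 0
  · have hs0 : p 0 ^ 2 = 0 := by rw [h0]; ring
    by_cases h1 : p 1 = 0
    · exfalso
      have hs1 : p 1 ^ 2 = 0 := by rw [h1]; ring
      have hc : (1 + α) * (β + γ) ≠ 0 := mul_ne_zero ha hβγ
      have hp2 : p 2 = 0 := sqz _ (by
        have : (1 + α) * (β + γ) * p 2 ^ 2 = 0 := by
          linear_combination he2' - (1 + α) * (1 - β) * he1 + (1 + α) * (1 - β) * hs0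
            + (1 - β) * (α + γ) * hs1
        exact (mul_eq_zero.mp this).resolve_left hc)
      have hp3 : p 3 = 0 := sqz _ (by
        linear_combination he1 - hs0 - hs1 - p 2 * hp2)
      exact hall fun i => by fin_cases i <;> assumption
    · by_cases hx2 : p 2 = 0
      · exfalso
        have hs2 : p 2 ^ 2 = 0 := by rw [hx2]; ring
        have hc : -((1 - β) * (α + γ)) ≠ 0 := neg_ne_zero.mpr (mul_ne_zero hb hαγ)
        have hp1 : p 1 = 0 := sqz _ (by
          have : -((1 - β) * (α + γ)) * p 1 ^ 2 = 0 := by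
            linear_combination he2' - (1 + α) * (1 - β) * he1 + (1 + α) * (1 - β) * hs0
              - (1 + α) * (β + γ) * hs2
          exact (mul_eq_zero.mp this).resolve_left hc)
        exact h1 hp1
      · by_cases hx3 : p 3 = 0
        · exfalso
          have hs3 : p 3 ^ 2 = 0 := by rw [hx3]; ring
          have hp2 : p 2 = 0 := sqz _ (by
            have : ((1 + γ) * (1 + α) - (1 - γ) * (1 - β)) * p 2 ^ 2 = 0 := by
              linear_combination he2' - (1 - γ) * (1 - β) * he1 + (1 - γ) * (1 - β) * hs0
                - (1 - β) * (α + γ) * hs3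
            exact (mul_eq_zero.mp this).resolve_left hNne)
          exact hx2 hp2
        · exact ⟨1, 2, 3, by decide, by decide, by decide, h1, hx2, hx3⟩
  · by_cases h1 : p 1 = 0
    · have hs1 : p 1 ^ 2 = 0 := by rw [h1]; ring
      by_cases hx2 : p 2 = 0
      · exfalso
        have hs2 : p 2 ^ 2 = 0 := by rw [hx2]; ring
        have hp3 : p 3 = 0 := sqz _ (by
          have : (1 + α) * (1 - β) * p 3 ^ 2 = 0 := by
            linear_combination he2' - (1 - γ) * (1 - β) * hs1 - (1 + γ) * (1 + α) * hs2
          exact (mul_eq_zero.mp this).resolve_left (mul_ne_zero ha hb))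
        have hp0 : p 0 = 0 := sqz _ (by
          linear_combination he1 - hs1 - hs2 - p 3 * hp3)
        exact h0 hp0
      · by_cases hx3 : p 3 = 0
        · exfalso
          have hs3 : p 3 ^ 2 = 0 := by rw [hx3]; ring
          have hp2 : p 2 = 0 := sqz _ (by
            have : (1 + γ) * (1 + α) * p 2 ^ 2 = 0 := by
              linear_combination he2' - (1 + α) * (1 - β) * hs3 - (1 - γ) * (1 - β) * hs1
            exact (mul_eq_zero.mp this).resolve_left (mul_ne_zero hg' ha))
          exact hx2 hp2
        · exact ⟨0, 2, 3, by decide, by decide, by decide, h0, hx2, hx3⟩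
    · by_cases hx2 : p 2 = 0
      · by_cases hx3 : p 3 = 0
        · exfalso
          have hs2 : p 2 ^ 2 = 0 := by rw [hx2]; ring
          have hs3 : p 3 ^ 2 = 0 := by rw [hx3]; ring
          have hp1 : p 1 = 0 := sqz _ (by
            have : (1 - γ) * (1 - β) * p 1 ^ 2 = 0 := by
              linear_combination he2' - (1 + α) * (1 - β) * hs3 - (1 + γ) * (1 + α) * hs2
            exact (mul_eq_zero.mp this).resolve_left (mul_ne_zero hg hb))
          exact h1 hp1
        · exact ⟨0, 1, 3, by decide, by decide, by decide, h0, h1, hx3⟩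
      · exact ⟨0, 1, 2, by decide, by decide, by decide, h0, h1, hx2⟩
end

section
/- For every point p on the elliptic curve E (defined by y₀²+y₁²+y₂²+y₃² = 0 and y₃² + ((1-γ)/(1+α))y₁² + ((1+γ)/(1-β))y₂² = 0 with α+β+γ+αβγ=0 and {α,β,γ}∩{0,±1}=∅), the orbit of p under the Klein four-group action by sign changes g₁: (p₀,p₁,p₂,p₃)↦(p₀,p₁,-p₂,-p₃), g₂: (p₀,p₁,p₂,p₃)↦(p₀,-p₁,p₂,-p₃) contains exactly 4 points. -/
variable {k : Type*} [Field k]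

/-- Sign pattern of the Klein four-group action on coordinates of `P³`:
`g₁ = (1,0)` negates coordinates 2,3; `g₂ = (0,1)` negates coordinates 1,3. -/
def klSgn (k : Type*) [Field k] (g : ZMod 2 × ZMod 2) : Fin 4 → k :=
  ![1, (-1) ^ g.2.val, (-1) ^ g.1.val, (-1) ^ (g.1.val + g.2.val)]

/-- The (affine representative of the) action of `g` on a point `p ∈ P³`. -/
def klAct (k : Type*) [Field k] (g : ZMod 2 × ZMod 2) (p : Fin 4 → k) : Fin 4 → k :=
  fun i => klSgn k g i * p i

/-- `p` lies on the elliptic curve `E`. -/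
def onE (α β γ : k) (p : Fin 4 → k) : Prop :=
  p 0 ^ 2 + p 1 ^ 2 + p 2 ^ 2 + p 3 ^ 2 = 0 ∧
  p 3 ^ 2 + ((1 - γ) / (1 + α)) * p 1 ^ 2 + ((1 + γ) / (1 - β)) * p 2 ^ 2 = 0

lemma hden1 {α : k} (hα : α ≠ 0 ∧ α ≠ 1 ∧ α ≠ -1) : (1 : k) + α ≠ 0 := by
  intro h; exact hα.2.2 (by linear_combination h)
lemma hden2 {β : k} (hβ : β ≠ 0 ∧ β ≠ 1 ∧ β ≠ -1) : (1 : k) - β ≠ 0 := by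
  intro h; exact hβ.2.1 (by linear_combination -h)

lemma hAne0 {α γ : k} (hα : α ≠ 0 ∧ α ≠ 1 ∧ α ≠ -1) (hγ : γ ≠ 0 ∧ γ ≠ 1 ∧ γ ≠ -1) :
    (1 - γ) / (1 + α) ≠ (0:k) :=
  div_ne_zero (fun h => hγ.2.1 (by linear_combination -h)) (hden1 hα)

lemma hBne0 {β γ : k} (hβ : β ≠ 0 ∧ β ≠ 1 ∧ β ≠ -1) (hγ : γ ≠ 0 ∧ γ ≠ 1 ∧ γ ≠ -1) :
    (1 + γ) / (1 - β) ≠ (0:k) :=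
  div_ne_zero (fun h => hγ.2.2 (by linear_combination h)) (hden2 hβ)

lemma hAne1 {α β γ : k} (hsum : α + β + γ + α * β * γ = 0)
    (hα : α ≠ 0 ∧ α ≠ 1 ∧ α ≠ -1) (hβ : β ≠ 0 ∧ β ≠ 1 ∧ β ≠ -1) :
    (1 - γ) / (1 + α) ≠ (1:k) := by
  intro h
  rw [div_eq_one_iff_eq (hden1 hα)] at h
  have hga : γ + α = 0 := by linear_combination -h
  have key : β * (1 - α) * (1 + α) = 0 := by
    linear_combination hsum - (1 + α * β) * hga
  rcases mul_eq_zero.mp key with h' | h'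
  · rcases mul_eq_zero.mp h' with h'' | h''
    · exact hβ.1 h''
    · exact hα.2.1 (by linear_combination -h'')
  · exact hα.2.2 (by linear_combination h')

lemma hBne1 {α β γ : k} (hsum : α + β + γ + α * β * γ = 0)
    (hα : α ≠ 0 ∧ α ≠ 1 ∧ α ≠ -1) (hβ : β ≠ 0 ∧ β ≠ 1 ∧ β ≠ -1) :
    (1 + γ) / (1 - β) ≠ (1:k) := by
  intro h
  rw [div_eq_one_iff_eq (hden2 hβ)] at h
  have hgb : γ + β = 0 := by linear_combination h
  have key : α * (1 - β) * (1 + β) = 0 := by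
    linear_combination hsum - (1 + α * β) * hgb
  rcases mul_eq_zero.mp key with h' | h'
  · rcases mul_eq_zero.mp h' with h'' | h''
    · exact hα.1 h''
    · exact hβ.2.1 (by linear_combination -h'')
  · exact hβ.2.2 (by linear_combination h')

lemma hAneB {α β γ : k} (hsum : α + β + γ + α * β * γ = 0)
    (hα : α ≠ 0 ∧ α ≠ 1 ∧ α ≠ -1) (hβ : β ≠ 0 ∧ β ≠ 1 ∧ β ≠ -1)
    (hγ : γ ≠ 0 ∧ γ ≠ 1 ∧ γ ≠ -1) :
    (1 - γ) / (1 + α) ≠ (1 + γ) / (1 - β) := by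
  intro h
  rw [div_eq_div_iff (hden1 hα) (hden2 hβ)] at h
  have key : γ * (β - 1) * (α + 1) = 0 := by linear_combination h + hsum
  rcases mul_eq_zero.mp key with h' | h'
  · rcases mul_eq_zero.mp h' with h'' | h''
    · exact hγ.1 h''
    · exact hβ.2.1 (by linear_combination h'')
  · exact hα.2.2 (by linear_combination h')

lemma allz {p : Fin 4 → k} (hp0 : p ≠ 0)
    (h0 : p 0 = 0) (h1 : p 1 = 0) (h2 : p 2 = 0) (h3 : p 3 = 0) : False := by
  apply hp0; funext i; fin_cases i <;> simpa

lemma sq0 {x : k} (h : x ^ 2 = 0) : x = 0 := pow_eq_zero_iff (n := 2) (by norm_num) |>.mp h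

section pairs
variable {α β γ : k} (hsum : α + β + γ + α * β * γ = 0)
  (hα : α ≠ 0 ∧ α ≠ 1 ∧ α ≠ -1) (hβ : β ≠ 0 ∧ β ≠ 1 ∧ β ≠ -1)
  (hγ : γ ≠ 0 ∧ γ ≠ 1 ∧ γ ≠ -1)
  {p : Fin 4 → k} (hp0 : p ≠ 0) (hp : onE α β γ p)

include hsum hα hβ hγ hp0 hp

lemma L23 (ha : p 2 = 0) (hb : p 3 = 0) : False := by
  obtain ⟨e1, e2⟩ := hp
  have k1 : (1 - γ) / (1 + α) * p 1 ^ 2 = 0 := by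
    linear_combination e2 - ((1 + γ) / (1 - β)) * p 2 * ha - p 3 * hb
  have h1 : p 1 = 0 := sq0 ((mul_eq_zero.mp k1).resolve_left (hAne0 hα hγ))
  have h0 : p 0 = 0 := sq0 (by linear_combination e1 - p 1 * h1 - p 2 * ha - p 3 * hb)
  exact allz hp0 h0 h1 ha hb

lemma L13 (ha : p 1 = 0) (hb : p 3 = 0) : False := by
  obtain ⟨e1, e2⟩ := hp
  have k1 : (1 + γ) / (1 - β) * p 2 ^ 2 = 0 := by
    linear_combination e2 - ((1 - γ) / (1 + α)) * p 1 * ha - p 3 * hb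
  have h1 : p 2 = 0 := sq0 ((mul_eq_zero.mp k1).resolve_left (hBne0 hβ hγ))
  have h0 : p 0 = 0 := sq0 (by linear_combination e1 - p 1 * ha - p 2 * h1 - p 3 * hb)
  exact allz hp0 h0 ha h1 hb

lemma L12 (ha : p 1 = 0) (hb : p 2 = 0) : False := by
  obtain ⟨e1, e2⟩ := hp
  have h3 : p 3 = 0 := sq0 (by
    linear_combination e2 - ((1 - γ) / (1 + α)) * p 1 * ha - ((1 + γ) / (1 - β)) * p 2 * hb)
  have h0 : p 0 = 0 := sq0 (by linear_combination e1 - p 1 * ha - p 2 * hb - p 3 * h3)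
  exact allz hp0 h0 ha hb h3

lemma L01 (ha : p 0 = 0) (hb : p 1 = 0) : False := by
  obtain ⟨e1, e2⟩ := hp
  have k1 : ((1 + γ) / (1 - β) - 1) * p 2 ^ 2 = 0 := by
    linear_combination e2 - e1 + p 0 * ha + (1 - (1 - γ) / (1 + α)) * p 1 * hb
  have h1 : p 2 = 0 := sq0 ((mul_eq_zero.mp k1).resolve_left
    (sub_ne_zero_of_ne (hBne1 hsum hα hβ)))
  have h3 : p 3 = 0 := sq0 (by linear_combination e1 - p 0 * ha - p 1 * hb - p 2 * h1)
  exact allz hp0 ha hb h1 h3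

lemma L02 (ha : p 0 = 0) (hb : p 2 = 0) : False := by
  obtain ⟨e1, e2⟩ := hp
  have k1 : ((1 - γ) / (1 + α) - 1) * p 1 ^ 2 = 0 := by
    linear_combination e2 - e1 + p 0 * ha + (1 - (1 + γ) / (1 - β)) * p 2 * hb
  have h1 : p 1 = 0 := sq0 ((mul_eq_zero.mp k1).resolve_left
    (sub_ne_zero_of_ne (hAne1 hsum hα hβ)))
  have h3 : p 3 = 0 := sq0 (by linear_combination e1 - p 0 * ha - p 1 * h1 - p 2 * hb)
  exact allz hp0 ha h1 hb h3

lemma L03 (ha : p 0 = 0) (hb : p 3 = 0) : False := by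
  obtain ⟨e1, e2⟩ := hp
  have k1 : ((1 - γ) / (1 + α) - (1 + γ) / (1 - β)) * p 1 ^ 2 = 0 := by
    linear_combination e2 - ((1 + γ) / (1 - β)) * e1 + ((1 + γ) / (1 - β)) * p 0 * ha
      + ((1 + γ) / (1 - β) - 1) * p 3 * hb
  have h1 : p 1 = 0 := sq0 ((mul_eq_zero.mp k1).resolve_left
    (sub_ne_zero_of_ne (hAneB hsum hα hβ hγ)))
  have h2' : p 2 = 0 := sq0 (by linear_combination e1 - p 0 * ha - p 1 * h1 - p 3 * hb)
  exact allz hp0 ha h1 h2' hb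

end pairs

lemma resolve {c x y u v : k} (h2 : (2 : k) ≠ 0)
    (ex : x = c * x) (ey : y = c * y) (eu : u + c * u = 0) (ev : v + c * v = 0) :
    (x = 0 ∧ y = 0) ∨ (u = 0 ∧ v = 0) := by
  by_cases hc : c = 1
  · subst hc
    right
    refine ⟨?_, ?_⟩
    · have h : 2 * u = 0 := by linear_combination eu
      exact (mul_eq_zero.mp h).resolve_left h2
    · have h : 2 * v = 0 := by linear_combination ev
      exact (mul_eq_zero.mp h).resolve_left h2
  · left
    have hc' : 1 - c ≠ 0 := fun h => hc (by linear_combination -h)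
    refine ⟨?_, ?_⟩
    · have h : (1 - c) * x = 0 := by linear_combination ex
      exact (mul_eq_zero.mp h).resolve_left hc'
    · have h : (1 - c) * y = 0 := by linear_combination ey
      exact (mul_eq_zero.mp h).resolve_left hc'


/-- for every point `p` on `E`, the orbit of `p` under the Klein four-group
action by sign changes contains exactly 4 points of `P³`: for `g ≠ h`, the representatives
`gp` and `hp` are not proportional (points of `P³` being nonzero 4-tuples up to scalar). -/
theorem stmt7 [IsAlgClosed k] (h2 : (2 : k) ≠ 0)
    (α β γ : k) (hsum : α + β + γ + α * β * γ = 0)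
    (hα : α ≠ 0 ∧ α ≠ 1 ∧ α ≠ -1) (hβ : β ≠ 0 ∧ β ≠ 1 ∧ β ≠ -1)
    (hγ : γ ≠ 0 ∧ γ ≠ 1 ∧ γ ≠ -1)
    (p : Fin 4 → k) (hp0 : p ≠ 0) (hp : onE α β γ p) :
    ∀ g h : ZMod 2 × ZMod 2, g ≠ h → ∀ c : k, klAct k g p ≠ c • klAct k h p := by
  intro g h hgh c heq
  fin_cases g <;> fin_cases h <;>
    first
    | exact absurd rfl hgh
    | · have e0 := congrFun heq 0
        have e1 := congrFun heq 1
        have e2 := congrFun heq 2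
        have e3 := congrFun heq 3
        norm_num [klAct, klSgn, ZMod.val, Matrix.cons_val_two, Matrix.cons_val_three, Matrix.vecHead, Matrix.vecTail] at e0 e1 e2 e3
        first
        | · have u1 : p 1 + c * p 1 = 0 := by
              first | linear_combination e1 | linear_combination -e1
            have u3 : p 3 + c * p 3 = 0 := by
              first | linear_combination e3 | linear_combination -e3
            rcases resolve h2 e0 e2 u1 u3 with ⟨ha, hb⟩ | ⟨ha, hb⟩
            · exact L02 hsum hα hβ hγ hp0 hp ha hb
            · exact L13 hsum hα hβ hγ hp0 hp ha hb
        | · have u2 : p 2 + c * p 2 = 0 := by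
              first | linear_combination e2 | linear_combination -e2
            have u3 : p 3 + c * p 3 = 0 := by
              first | linear_combination e3 | linear_combination -e3
            rcases resolve h2 e0 e1 u2 u3 with ⟨ha, hb⟩ | ⟨ha, hb⟩
            · exact L01 hsum hα hβ hγ hp0 hp ha hb
            · exact L23 hsum hα hβ hγ hp0 hp ha hb
        | · have u1 : p 1 + c * p 1 = 0 := by
              first | linear_combination e1 | linear_combination -e1
            have u2 : p 2 + c * p 2 = 0 := by
              first | linear_combination e2 | linear_combination -e2
            rcases resolve h2 e0 e3 u1 u2 with ⟨ha, hb⟩ | ⟨ha, hb⟩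
            · exact L03 hsum hα hβ hγ hp0 hp ha hb
            · exact L12 hsum hα hβ hγ hp0 hp ha hb
end

section
/- If the triple (α,β,γ) ∈ k³ satisfies α + β + γ + αβγ = 0 and {α,β,γ} ∩ {0,±1} = ∅, then each of the triples (α, 1/β, 1/γ), (1/α, β, 1/γ), and (1/α, 1/β, γ) also satisfies both conditions. -/

lemma invtrip {k : Type*} [Field k] {x : k} (h : x ≠ 0 ∧ x ≠ 1 ∧ x ≠ -1) :
    x⁻¹ ≠ 0 ∧ x⁻¹ ≠ 1 ∧ x⁻¹ ≠ -1 := by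
  obtain ⟨h0, h1, h2⟩ := h
  refine ⟨inv_ne_zero h0, ?_, ?_⟩
  · intro h; apply h1
    have := congrArg Inv.inv h; rw [inv_inv] at this; rw [this]; norm_num
  · intro h; apply h2
    have := congrArg Inv.inv h; rw [inv_inv] at this; rw [this]; norm_num

/-- if `(α,β,γ)` satisfies `α+β+γ+αβγ = 0` and `{α,β,γ} ∩ {0,±1} = ∅`, then so
do `(α, 1/β, 1/γ)`, `(1/α, β, 1/γ)` and `(1/α, 1/β, γ)`. -/
theorem stmt8 {k : Type*} [Field k] (α β γ : k)
    (hsum : α + β + γ + α * β * γ = 0)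
    (hα : α ≠ 0 ∧ α ≠ 1 ∧ α ≠ -1) (hβ : β ≠ 0 ∧ β ≠ 1 ∧ β ≠ -1)
    (hγ : γ ≠ 0 ∧ γ ≠ 1 ∧ γ ≠ -1) :
    (α + β⁻¹ + γ⁻¹ + α * β⁻¹ * γ⁻¹ = 0 ∧
      (α ≠ 0 ∧ α ≠ 1 ∧ α ≠ -1) ∧ (β⁻¹ ≠ 0 ∧ β⁻¹ ≠ 1 ∧ β⁻¹ ≠ -1) ∧
      (γ⁻¹ ≠ 0 ∧ γ⁻¹ ≠ 1 ∧ γ⁻¹ ≠ -1)) ∧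
    (α⁻¹ + β + γ⁻¹ + α⁻¹ * β * γ⁻¹ = 0 ∧
      (α⁻¹ ≠ 0 ∧ α⁻¹ ≠ 1 ∧ α⁻¹ ≠ -1) ∧ (β ≠ 0 ∧ β ≠ 1 ∧ β ≠ -1) ∧
      (γ⁻¹ ≠ 0 ∧ γ⁻¹ ≠ 1 ∧ γ⁻¹ ≠ -1)) ∧
    (α⁻¹ + β⁻¹ + γ + α⁻¹ * β⁻¹ * γ = 0 ∧
      (α⁻¹ ≠ 0 ∧ α⁻¹ ≠ 1 ∧ α⁻¹ ≠ -1) ∧ (β⁻¹ ≠ 0 ∧ β⁻¹ ≠ 1 ∧ β⁻¹ ≠ -1) ∧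
      (γ ≠ 0 ∧ γ ≠ 1 ∧ γ ≠ -1)) := by
  obtain ⟨a0,a1,a2⟩ := hα
  obtain ⟨b0,b1,b2⟩ := hβ
  obtain ⟨c0,c1,c2⟩ := hγ
  refine ⟨⟨?_, ⟨a0,a1,a2⟩, invtrip ⟨b0,b1,b2⟩, invtrip ⟨c0,c1,c2⟩⟩,
    ⟨?_, invtrip ⟨a0,a1,a2⟩, ⟨b0,b1,b2⟩, invtrip ⟨c0,c1,c2⟩⟩,
    ⟨?_, invtrip ⟨a0,a1,a2⟩, invtrip ⟨b0,b1,b2⟩, ⟨c0,c1,c2⟩⟩⟩ <;>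
  · field_simp
    linear_combination hsum
end

section
/- If p ∈ P³ has exactly two non-zero coordinates and the parameters satisfy {α,β,γ} ∩ {0,±1} = ∅, then the 6×4 matrix M(p) with rows (-p₁, p₀, αp₃, -αp₂), (p₁, p₀, -p₃, -p₂), (-p₂, -βp₃, p₀, βp₁), (p₂, -p₃, p₀, -p₁), (-p₃, -γp₂, γp₁, p₀), (p₃, p₂, p₁, p₀) has rank at least 4. -/
open Matrix

lemma aux19 {k : Type*} [Field k] (M : Matrix (Fin 6) (Fin 4) k) (r : Fin 4 → Fin 6)
    (h : (M.submatrix r id).det ≠ 0) : 4 ≤ M.rank := by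
  have h1 : (M.submatrix r id).rank = 4 := by
    rw [Matrix.rank_of_isUnit _ ((Matrix.isUnit_iff_isUnit_det _).2 h.isUnit)]
    simp
  have hm : M.submatrix r id = ((1 : Matrix (Fin 6) (Fin 6) k).submatrix r (Equiv.refl _)) * M := by
    rw [Matrix.one_submatrix_mul]; rfl
  calc (4 : ℕ) = (M.submatrix r id).rank := h1.symm
    _ ≤ M.rank := by rw [hm]; exact Matrix.rank_mul_le_right _ _

set_option maxHeartbeats 1600000 in
/-- if `p ∈ P³` has exactly two non-zero coordinates and
`{α,β,γ} ∩ {0,±1} = ∅` (with `char k ≠ 2`), then the 6×4 matrix of the multilinearised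
relations of the twisted Sklyanin algebra, evaluated at `p`, has rank at least 4. -/
theorem stmt19 {k : Type*} [Field k] (h2 : (2 : k) ≠ 0)
    (α β γ : k)
    (hα : α ≠ 0 ∧ α ≠ 1 ∧ α ≠ -1) (hβ : β ≠ 0 ∧ β ≠ 1 ∧ β ≠ -1)
    (hγ : γ ≠ 0 ∧ γ ≠ 1 ∧ γ ≠ -1)
    (p : Fin 4 → k)
    (htwo : ∃ i j : Fin 4, i ≠ j ∧ p i ≠ 0 ∧ p j ≠ 0 ∧
      ∀ l : Fin 4, l ≠ i → l ≠ j → p l = 0) :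
    4 ≤ (!![-p 1, p 0, α * p 3, -α * p 2;
            p 1, p 0, -p 3, -p 2;
            -p 2, -β * p 3, p 0, β * p 1;
            p 2, -p 3, p 0, -p 1;
            -p 3, -γ * p 2, γ * p 1, p 0;
            p 3, p 2, p 1, p 0] : Matrix (Fin 6) (Fin 4) k).rank := by
  set M : Matrix (Fin 6) (Fin 4) k := !![-p 1, p 0, α * p 3, -α * p 2;
            p 1, p 0, -p 3, -p 2;
            -p 2, -β * p 3, p 0, β * p 1;
            p 2, -p 3, p 0, -p 1;
            -p 3, -γ * p 2, γ * p 1, p 0;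
            p 3, p 2, p 1, p 0] with hM
  have hα1 : (1 : k) - α ≠ 0 := fun h => hα.2.1 (by linear_combination -h)
  have hα2 : (1 : k) + α ≠ 0 := fun h => hα.2.2 (by linear_combination h)
  have hβ2 : (1 : k) + β ≠ 0 := fun h => hβ.2.2 (by linear_combination h)
  have hcases : (p 2 = 0 ∧ p 3 = 0 ∧ p 0 ≠ 0 ∧ p 1 ≠ 0) ∨
    (p 1 = 0 ∧ p 3 = 0 ∧ p 0 ≠ 0 ∧ p 2 ≠ 0) ∨
    (p 1 = 0 ∧ p 2 = 0 ∧ p 0 ≠ 0 ∧ p 3 ≠ 0) ∨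
    (p 0 = 0 ∧ p 3 = 0 ∧ p 1 ≠ 0 ∧ p 2 ≠ 0) ∨
    (p 0 = 0 ∧ p 2 = 0 ∧ p 1 ≠ 0 ∧ p 3 ≠ 0) ∨
    (p 0 = 0 ∧ p 1 = 0 ∧ p 2 ≠ 0 ∧ p 3 ≠ 0) := by
    obtain ⟨i, j, hij, hi, hj, hl⟩ := htwo
    fin_cases i <;> fin_cases j <;>
      first
      | exact absurd rfl hij
      | exact Or.inl ⟨hl 2 (by decide) (by decide), hl 3 (by decide) (by decide), hi, hj⟩
      | exact Or.inl ⟨hl 2 (by decide) (by decide), hl 3 (by decide) (by decide), hj, hi⟩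
      | exact Or.inr (Or.inl ⟨hl 1 (by decide) (by decide), hl 3 (by decide) (by decide), hi, hj⟩)
      | exact Or.inr (Or.inl ⟨hl 1 (by decide) (by decide), hl 3 (by decide) (by decide), hj, hi⟩)
      | exact Or.inr (Or.inr (Or.inl ⟨hl 1 (by decide) (by decide), hl 2 (by decide) (by decide), hi, hj⟩))
      | exact Or.inr (Or.inr (Or.inl ⟨hl 1 (by decide) (by decide), hl 2 (by decide) (by decide), hj, hi⟩))
      | exact Or.inr (Or.inr (Or.inr (Or.inl ⟨hl 0 (by decide) (by decide), hl 3 (by decide) (by decide), hi, hj⟩)))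
      | exact Or.inr (Or.inr (Or.inr (Or.inl ⟨hl 0 (by decide) (by decide), hl 3 (by decide) (by decide), hj, hi⟩)))
      | exact Or.inr (Or.inr (Or.inr (Or.inr (Or.inl ⟨hl 0 (by decide) (by decide), hl 2 (by decide) (by decide), hi, hj⟩))))
      | exact Or.inr (Or.inr (Or.inr (Or.inr (Or.inl ⟨hl 0 (by decide) (by decide), hl 2 (by decide) (by decide), hj, hi⟩))))
      | exact Or.inr (Or.inr (Or.inr (Or.inr (Or.inr ⟨hl 0 (by decide) (by decide), hl 1 (by decide) (by decide), hi, hj⟩))))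
      | exact Or.inr (Or.inr (Or.inr (Or.inr (Or.inr ⟨hl 0 (by decide) (by decide), hl 1 (by decide) (by decide), hj, hi⟩))))
  rcases hcases with ⟨hz1, hz2, hn1, hn2⟩ | ⟨hz1, hz2, hn1, hn2⟩ | ⟨hz1, hz2, hn1, hn2⟩ |
    ⟨hz1, hz2, hn1, hn2⟩ | ⟨hz1, hz2, hn1, hn2⟩ | ⟨hz1, hz2, hn1, hn2⟩
  · apply aux19 _ ![0, 1, 2, 3]
    have hd : (M.submatrix ![0, 1, 2, 3] id).det
        = 2 * (1 + β) * (p 0) ^ 2 * (p 1) ^ 2 := by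
      rw [hM]
      simp only [Matrix.det_succ_row_zero, Fin.sum_univ_succ]
      simp [Matrix.submatrix, Matrix.det_succ_row_zero, Fin.sum_univ_succ, hz1, hz2, Fin.succAbove, Fin.castSucc, Fin.castAdd, Fin.castLE, Fin.succ, Fin.lt_def]
      ring
    rw [hd]
    exact mul_ne_zero (mul_ne_zero (mul_ne_zero h2 hβ2) (pow_ne_zero _ hn1)) (pow_ne_zero _ hn2)
  · apply aux19 _ ![0, 1, 2, 3]
    have hd : (M.submatrix ![0, 1, 2, 3] id).det
        = -(2 * (1 - α) * (p 0) ^ 2 * (p 2) ^ 2) := by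
      rw [hM]
      simp only [Matrix.det_succ_row_zero, Fin.sum_univ_succ]
      simp [Matrix.submatrix, Matrix.det_succ_row_zero, Fin.sum_univ_succ, hz1, hz2, Fin.succAbove, Fin.castSucc, Fin.castAdd, Fin.castLE, Fin.succ, Fin.lt_def]
      ring
    rw [hd]
    exact neg_ne_zero.2 <|
      mul_ne_zero (mul_ne_zero (mul_ne_zero h2 hα1) (pow_ne_zero _ hn1)) (pow_ne_zero _ hn2)
  · apply aux19 _ ![0, 1, 4, 5]
    have hsub : M.submatrix ![0, 1, 4, 5] id =
        !![-p 1, p 0, α * p 3, -α * p 2;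
           p 1, p 0, -p 3, -p 2;
           -p 3, -γ * p 2, γ * p 1, p 0;
           p 3, p 2, p 1, p 0] := by
      ext i j
      fin_cases i <;> fin_cases j <;> rfl
    have hd : (M.submatrix ![0, 1, 4, 5] id).det
        = 2 * (1 + α) * (p 0) ^ 2 * (p 3) ^ 2 := by
      rw [hsub]
      simp only [Matrix.det_succ_row_zero, Fin.sum_univ_succ]
      simp [Matrix.submatrix, Matrix.det_succ_row_zero, Fin.sum_univ_succ, hz1, hz2, Fin.succAbove, Fin.castSucc, Fin.castAdd, Fin.castLE, Fin.succ, Fin.lt_def]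
      ring
    rw [hd]
    exact mul_ne_zero (mul_ne_zero (mul_ne_zero h2 hα2) (pow_ne_zero _ hn1)) (pow_ne_zero _ hn2)
  · apply aux19 _ ![0, 1, 4, 5]
    have hsub : M.submatrix ![0, 1, 4, 5] id =
        !![-p 1, p 0, α * p 3, -α * p 2;
           p 1, p 0, -p 3, -p 2;
           -p 3, -γ * p 2, γ * p 1, p 0;
           p 3, p 2, p 1, p 0] := by
      ext i j
      fin_cases i <;> fin_cases j <;> rfl
    have hd : (M.submatrix ![0, 1, 4, 5] id).det
        = -(2 * γ * (1 + α) * (p 1) ^ 2 * (p 2) ^ 2) := by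
      rw [hsub]
      simp only [Matrix.det_succ_row_zero, Fin.sum_univ_succ]
      simp [Matrix.submatrix, Matrix.det_succ_row_zero, Fin.sum_univ_succ, hz1, hz2, Fin.succAbove, Fin.castSucc, Fin.castAdd, Fin.castLE, Fin.succ, Fin.lt_def]
      ring
    rw [hd]
    exact neg_ne_zero.2 <| mul_ne_zero (mul_ne_zero (mul_ne_zero (mul_ne_zero h2 hγ.1) hα2)
      (pow_ne_zero _ hn1)) (pow_ne_zero _ hn2)
  · apply aux19 _ ![0, 1, 2, 3]
    have hd : (M.submatrix ![0, 1, 2, 3] id).det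
        = -(2 * β * (1 - α) * (p 1) ^ 2 * (p 3) ^ 2) := by
      rw [hM]
      simp only [Matrix.det_succ_row_zero, Fin.sum_univ_succ]
      simp [Matrix.submatrix, Matrix.det_succ_row_zero, Fin.sum_univ_succ, hz1, hz2, Fin.succAbove, Fin.castSucc, Fin.castAdd, Fin.castLE, Fin.succ, Fin.lt_def]
      ring
    rw [hd]
    exact neg_ne_zero.2 <| mul_ne_zero (mul_ne_zero (mul_ne_zero (mul_ne_zero h2 hβ.1) hα1)
      (pow_ne_zero _ hn1)) (pow_ne_zero _ hn2)
  · apply aux19 _ ![0, 1, 2, 3]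
    have hd : (M.submatrix ![0, 1, 2, 3] id).det
        = -(2 * α * (1 + β) * (p 2) ^ 2 * (p 3) ^ 2) := by
      rw [hM]
      simp only [Matrix.det_succ_row_zero, Fin.sum_univ_succ]
      simp [Matrix.submatrix, Matrix.det_succ_row_zero, Fin.sum_univ_succ, hz1, hz2, Fin.succAbove, Fin.castSucc, Fin.castAdd, Fin.castLE, Fin.succ, Fin.lt_def]
      ring
    rw [hd]
    exact neg_ne_zero.2 <| mul_ne_zero (mul_ne_zero (mul_ne_zero (mul_ne_zero h2 hα.1) hβ2)
      (pow_ne_zero _ hn1)) (pow_ne_zero _ hn2)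
end
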